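/- arXiv:1402.2500 — 2 statements merged into one kernel-verified Lean document; each statement's English description precedes it below -/
import Mathlib

section
/- Let (W,S) be a Coxeter system with reflection set T and length function ℓ. Let t1, t2 ∈ T be distinct reflections and z ∈ W with ℓ(z) < ℓ(z t1) and ℓ(z t1 t2) < ℓ(z t1). Then there exist reflections t1', t2' ∈ ⟨t1,t2⟩ ∩ T with t1' t2' = t1 t2, such that the pair (t1', t2') lies in the Hurwitz orbit of (t1, t2) under the braid group B_2, and such that ℓ(z t1') < max(ℓ(z), ℓ(z t1 t2)) < ℓ(z t1); moreover one of the following holds: ℓ(z) < ℓ(z t1') < ℓ(z t1' t2'), or ℓ(z) > ℓ(z t1') > ℓ(z t1' t2'), or ℓ(z) > ℓ(z t1') < ℓ(z t1' t2'). -/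
/-- The Hurwitz move `σᵢ` on tuples of group elements (represented as lists):
`(t₁, …, a, b, …, tₙ) ↦ (t₁, …, a b a, a, …, tₙ)` (recall that reflections are
involutions, so `a b a = a b a⁻¹`). -/
def HurwitzMove {W : Type*} [Group W] (l l' : List W) : Prop :=
  ∃ (l₁ l₂ : List W) (a b : W),
    l = l₁ ++ [a, b] ++ l₂ ∧ l' = l₁ ++ [a * b * a, a] ++ l₂

open CoxeterSystem List
open scoped Classical
set_option linter.unusedSectionVars false
set_option maxHeartbeats 1000000

namespace HurwitzAux

variable {B : Type*} {W : Type*} [Group W] {M : CoxeterMatrix B} (cs : CoxeterSystem M W)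

local prefix:100 "σ" => cs.simple
local prefix:100 "π" => cs.wordProd
local prefix:100 "ℓ" => cs.length

noncomputable def eps (t x : W) : ℤˣ := if x = t then -1 else 1

lemma eps_mul_self (t x : W) : eps t x * eps t x = 1 := by
  unfold eps; split <;> simp

lemma eps_conj (t g x : W) : eps t (g * x * g⁻¹) = eps (g⁻¹ * t * g) x := by
  unfold eps
  apply if_congr _ rfl rfl
  constructor
  · intro h; rw [← h]; group
  · intro h; rw [h]; group

noncomputable def muFun (i : B) : W × ℤˣ → W × ℤˣ :=
  fun p => (σ i * p.1 * σ i, eps (σ i) p.1 * p.2)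

lemma muFun_involutive (i : B) : Function.Involutive (muFun cs i) := by
  intro p
  unfold muFun
  have h1 : σ i * (σ i * p.1 * σ i) * σ i = p.1 := by
    rw [← mul_assoc, ← mul_assoc, cs.simple_mul_simple_self, one_mul, mul_assoc,
      cs.simple_mul_simple_self, mul_one]
  have h2 : eps (σ i) (σ i * p.1 * σ i) = eps (σ i) p.1 := by
    unfold eps
    apply if_congr _ rfl rfl
    constructor
    · intro h
      have := congrArg (fun x => σ i * x * σ i) h
      simpa [h1, ← mul_assoc, cs.simple_mul_simple_self] using this
    · intro h; rw [h, mul_assoc, cs.simple_mul_simple_self, mul_one]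
  ext
  · exact h1
  · simp [h2, ← mul_assoc, eps_mul_self]

noncomputable def mu (i : B) : Equiv.Perm (W × ℤˣ) := (muFun_involutive cs i).toPerm

lemma mu_apply (i : B) (p : W × ℤˣ) :
    mu cs i p = (σ i * p.1 * σ i, eps (σ i) p.1 * p.2) := rfl

lemma braid_pow (i j : B) (n : ℕ) (p : W × ℤˣ) :
    ((mu cs i * mu cs j) ^ n) p =
      ((σ i * σ j) ^ n * p.1 * ((σ i * σ j) ^ n)⁻¹,
        (∏ k ∈ Finset.range (2 * n), eps (σ j * (σ i * σ j) ^ k) p.1) * p.2) := by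
  have hcinv : (σ i * σ j)⁻¹ = σ j * σ i := by
    rw [mul_inv_rev, cs.inv_simple, cs.inv_simple]
  have hbc : σ j * (σ i * σ j) = (σ i * σ j)⁻¹ * σ j := by rw [hcinv]; group
  have hkey : ∀ k : ℕ, σ j * (σ i * σ j) ^ k = ((σ i * σ j) ^ k)⁻¹ * σ j := by
    intro k
    induction k with
    | zero => simp
    | succ m ih =>
      calc σ j * (σ i * σ j) ^ (m+1) = (σ j * (σ i * σ j) ^ m) * (σ i * σ j) := by
            rw [pow_succ, mul_assoc]
        _ = ((σ i * σ j)^m)⁻¹ * (σ j * (σ i * σ j)) := by rw [ih, mul_assoc]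
        _ = ((σ i * σ j)^m)⁻¹ * ((σ i * σ j)⁻¹ * σ j) := by rw [hbc]
        _ = ((σ i * σ j)^(m+1))⁻¹ * σ j := by
              rw [← mul_assoc, ← mul_inv_rev, ← pow_succ']
  induction n with
  | zero => simp
  | succ m ih =>
    rw [pow_succ' (mu cs i * mu cs j) m, Equiv.Perm.mul_apply, ih, Equiv.Perm.mul_apply,
      mu_apply, mu_apply]
    dsimp only
    rw [Prod.mk.injEq]
    refine ⟨?_, ?_⟩
    · conv_rhs => rw [pow_succ']
      rw [mul_inv_rev (σ i * σ j) ((σ i * σ j)^m), hcinv]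
      simp only [mul_assoc]
    · have e1 : eps (σ j) ((σ i * σ j)^m * p.1 * ((σ i * σ j)^m)⁻¹)
          = eps (σ j * (σ i * σ j) ^ (2*m)) p.1 := by
        rw [eps_conj]
        congr 1
        rw [← hkey m, mul_assoc, ← pow_add, two_mul]
      have e2 : eps (σ i) (σ j * ((σ i * σ j)^m * p.1 * ((σ i * σ j)^m)⁻¹) * σ j)
          = eps (σ j * (σ i * σ j) ^ (2*m+1)) p.1 := by
        have hrw : σ j * ((σ i * σ j)^m * p.1 * ((σ i * σ j)^m)⁻¹) * σ j
            = (σ j * (σ i * σ j)^m) * p.1 * (σ j * (σ i * σ j)^m)⁻¹ := by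
          rw [mul_inv_rev, cs.inv_simple]
          simp only [mul_assoc]
        rw [hrw, eps_conj]
        congr 1
        rw [mul_inv_rev, cs.inv_simple]
        calc ((σ i * σ j)^m)⁻¹ * σ j * σ i * (σ j * (σ i * σ j) ^ m)
            = ((σ i * σ j)^m)⁻¹ * (σ j * ((σ i * σ j) * (σ i * σ j) ^ m)) := by
              simp only [mul_assoc]
          _ = ((σ i * σ j)^m)⁻¹ * (σ j * (σ i * σ j) ^ (m+1)) := by rw [← pow_succ']
          _ = ((σ i * σ j)^m)⁻¹ * (((σ i * σ j) ^ (m+1))⁻¹ * σ j) := by rw [hkey]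
          _ = ((σ i * σ j) ^ (m+1) * (σ i * σ j)^m)⁻¹ * σ j := by
              rw [← mul_assoc, ← mul_inv_rev]
          _ = ((σ i * σ j) ^ (2*m+1))⁻¹ * σ j := by
              rw [← pow_add]
              have hmm : m+1+m = 2*m+1 := by omega
              rw [hmm]
          _ = σ j * (σ i * σ j) ^ (2*m+1) := (hkey _).symm
      rw [e1, e2]
      have h2m : 2*(m+1) = 2*m+1+1 := by ring
      rw [h2m, Finset.prod_range_succ, Finset.prod_range_succ]
      simp only [mul_assoc, mul_comm, mul_left_comm]

lemma braid_liftable : M.IsLiftable (fun i => mu cs i) := by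
  intro i j
  refine Equiv.ext fun p => ?_
  show ((mu cs i * mu cs j) ^ M.M i j) p = (1 : Equiv.Perm (W × ℤˣ)) p
  rw [braid_pow cs i j (M.M i j) p]
  have hc : (σ i * σ j) ^ M.M i j = 1 := cs.simple_mul_simple_pow i j
  have hprod : (∏ k ∈ Finset.range (2 * M.M i j), eps (σ j * (σ i * σ j) ^ k) p.1) = 1 := by
    rw [two_mul, Finset.prod_range_add]
    have heq : ∀ k, eps (σ j * (σ i * σ j) ^ (M.M i j + k)) p.1
        = eps (σ j * (σ i * σ j) ^ k) p.1 := by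
      intro k
      congr 2
      rw [pow_add, hc, one_mul]
    rw [Finset.prod_congr rfl (fun k _ => heq k), ← Finset.prod_mul_distrib]
    rw [Finset.prod_congr rfl (fun k _ => eps_mul_self _ _), Finset.prod_const_one]
  rw [hc, hprod]
  simp

/-- The permutation representation of `W` on `W × ℤˣ`. -/
noncomputable def Phi : W →* Equiv.Perm (W × ℤˣ) :=
  cs.lift ⟨fun i => mu cs i, braid_liftable cs⟩

lemma Phi_simple (i : B) : Phi cs (σ i) = mu cs i :=
  cs.lift_apply_simple (braid_liftable cs) i

/-- The sign cocycle. -/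
noncomputable def sgn (w t : W) : ℤˣ := ((Phi cs w) (t, 1)).2

lemma Phi_apply (w : W) : ∀ (t : W) (ε : ℤˣ),
    (Phi cs w) (t, ε) = (w * t * w⁻¹, ε * sgn cs w t) := by
  induction w using cs.simple_induction_left with
  | one =>
    intro t ε
    have h1 : Phi cs (1 : W) = 1 := map_one _
    simp [sgn, h1]
  | mul_simple_left w i ih =>
    have key : ∀ (t : W) (ε : ℤˣ), (Phi cs (σ i * w)) (t, ε)
        = ((σ i * w) * t * (σ i * w)⁻¹, eps (σ i) (w * t * w⁻¹) * (ε * sgn cs w t)) := by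
      intro t ε
      rw [map_mul, Equiv.Perm.mul_apply, ih t ε, Phi_simple, mu_apply]
      dsimp only
      rw [Prod.mk.injEq]
      refine ⟨?_, rfl⟩
      rw [mul_inv_rev, cs.inv_simple]
      group
    intro t ε
    rw [key t ε]
    have hsgn : sgn cs (σ i * w) t = eps (σ i) (w * t * w⁻¹) * (1 * sgn cs w t) := by
      rw [sgn, key t 1]
    rw [hsgn]
    rw [Prod.mk.injEq]
    refine ⟨rfl, ?_⟩
    rw [one_mul, mul_left_comm]

lemma unit_mul_self (u : ℤˣ) : u * u = 1 := by
  rcases Int.units_eq_one_or u with h | h <;> simp [h]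

lemma unit_dichotomy (u : ℤˣ) : u = 1 ∨ u = -1 := Int.units_eq_one_or u

lemma sgn_cocycle (u v t : W) :
    sgn cs (u * v) t = sgn cs u (v * t * v⁻¹) * sgn cs v t := by
  have h : (Phi cs (u * v)) (t, 1) = (Phi cs u) ((Phi cs v) (t, 1)) := by
    rw [map_mul, Equiv.Perm.mul_apply]
  have h2 : sgn cs (u * v) t = ((Phi cs u) ((Phi cs v) (t, 1))).2 := by rw [sgn, h]
  rw [h2, Phi_apply cs v t 1, Phi_apply cs u (v * t * v⁻¹) (1 * sgn cs v t)]
  dsimp only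
  rw [one_mul, mul_comm]

lemma sgn_one (t : W) : sgn cs 1 t = 1 := by
  have h1 : Phi cs (1 : W) = 1 := map_one _
  simp [sgn, h1]

lemma sgn_simple (i : B) (t : W) : sgn cs (σ i) t = eps (σ i) t := by
  rw [sgn, Phi_simple, mu_apply, mul_one]

lemma sgn_simple_self (i : B) : sgn cs (σ i) (σ i) = -1 := by
  rw [sgn_simple]; unfold eps; rw [if_pos rfl]

lemma sgn_conj_inv (u z : W) : sgn cs u (u⁻¹ * z * u) = sgn cs u⁻¹ z := by
  have h := sgn_cocycle cs u u⁻¹ z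
  rw [mul_inv_cancel, inv_inv, sgn_one] at h
  have h2 := congrArg (fun x => x * sgn cs u⁻¹ z) h.symm
  rwa [mul_assoc, unit_mul_self, mul_one, one_mul] at h2

lemma sgn_wordProd (ω : List B) (t : W) :
    sgn cs (π ω) t = (-1 : ℤˣ) ^ ((cs.rightInvSeq ω).count t) := by
  induction ω with
  | nil => simp [sgn_one]
  | cons i ω ih =>
    rw [cs.wordProd_cons, sgn_cocycle, ih, sgn_simple]
    rw [show cs.rightInvSeq (i :: ω) = ((π ω)⁻¹ * σ i * π ω) :: cs.rightInvSeq ω from rfl]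
    rw [List.count_cons]
    have heps : eps (σ i) ((π ω) * t * (π ω)⁻¹)
        = (-1 : ℤˣ) ^ (if (π ω)⁻¹ * σ i * π ω = t then 1 else 0) := by
      rw [eps_conj]
      unfold eps
      by_cases h : t = (π ω)⁻¹ * σ i * π ω
      · rw [if_pos h, if_pos h.symm, pow_one]
      · rw [if_neg h, if_neg (fun hh => h hh.symm), pow_zero]
    rw [heps, pow_add, mul_comm]
    simp only [beq_iff_eq]

lemma isRightInversion_of_sgn_neg {w t : W} (h : sgn cs w t = -1) :
    cs.IsRightInversion w t := by
  obtain ⟨ω, hred, rfl⟩ := cs.exists_reduced_word' w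
  have hcount := (sgn_wordProd cs ω t).symm.trans h
  have hodd : Odd ((cs.rightInvSeq ω).count t) := by
    by_contra he
    rw [Nat.not_odd_iff_even] at he
    rw [he.neg_one_pow] at hcount
    exact (by decide : ((1 : ℤˣ) ≠ -1)) hcount
  have hmem : t ∈ cs.rightInvSeq ω := by
    by_contra hmem
    rw [List.count_eq_zero_of_not_mem hmem] at hodd
    simpa using hodd
  exact cs.isRightInversion_of_mem_rightInvSeq hred hmem

lemma sgn_refl_self {t : W} (ht : cs.IsReflection t) : sgn cs t t = -1 := by
  obtain ⟨u, i, hui⟩ := ht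
  have hconj : u⁻¹ * t * u = σ i := by rw [hui]; group
  have hsplit : t = u * (σ i * u⁻¹) := by rw [hui, mul_assoc]
  have h1 : sgn cs t t = sgn cs u ((σ i * u⁻¹) * t * (σ i * u⁻¹)⁻¹) * sgn cs (σ i * u⁻¹) t := by
    nth_rewrite 1 [hsplit]
    rw [sgn_cocycle]
  have hA : (σ i * u⁻¹) * t * (σ i * u⁻¹)⁻¹ = σ i := by
    rw [mul_inv_rev, inv_inv, cs.inv_simple]
    calc σ i * u⁻¹ * t * (u * σ i) = σ i * (u⁻¹ * t * u) * σ i := by simp only [mul_assoc]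
      _ = σ i * σ i * σ i := by rw [hconj]
      _ = σ i := by rw [cs.simple_mul_simple_self, one_mul]
  have h2 : sgn cs (σ i * u⁻¹) t = sgn cs (σ i) (u⁻¹ * t * u) * sgn cs u⁻¹ t := by
    rw [sgn_cocycle, inv_inv]
  have h3 : sgn cs u (σ i) * sgn cs u⁻¹ t = 1 := by
    have := sgn_conj_inv cs u t
    rw [hconj] at this
    rw [this, unit_mul_self]
  rw [h1, hA, h2, hconj, sgn_simple_self]
  calc sgn cs u (σ i) * (-1 * sgn cs u⁻¹ t) = -1 * (sgn cs u (σ i) * sgn cs u⁻¹ t) := by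
        rw [mul_comm (sgn cs u (σ i)), mul_assoc, mul_comm (sgn cs u⁻¹ t)]
    _ = -1 := by rw [h3, mul_one]

lemma sgn_neg_iff {w t : W} (ht : cs.IsReflection t) :
    sgn cs w t = -1 ↔ ℓ (w * t) < ℓ w := by
  constructor
  · intro h
    exact (isRightInversion_of_sgn_neg cs h).2
  · intro h
    rcases unit_dichotomy (sgn cs w t) with h1 | h1
    · exfalso
      have hsgn : sgn cs (w * t) t = -1 := by
        rw [sgn_cocycle]
        have : t * t * t⁻¹ = t := by rw [ht.mul_self, one_mul, ht.inv]
        rw [this, h1, one_mul, sgn_refl_self cs ht]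
      have := (isRightInversion_of_sgn_neg cs hsgn).2
      rw [mul_assoc, ht.mul_self, mul_one] at this
      omega
    · exact h1

lemma sgn_pos_iff {w t : W} (ht : cs.IsReflection t) :
    sgn cs w t = 1 ↔ ℓ w < ℓ (w * t) := by
  have hne := ht.length_mul_left_ne w
  constructor
  · intro h
    rcases Nat.lt_or_ge (ℓ w) (ℓ (w * t)) with h1 | h1
    · exact h1
    · exfalso
      have : ℓ (w * t) < ℓ w := by omega
      rw [← sgn_neg_iff cs ht] at this
      rw [h] at this
      exact (by decide : ((1:ℤˣ) ≠ -1)) this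
  · intro h
    rcases unit_dichotomy (sgn cs w t) with h1 | h1
    · exact h1
    · exfalso
      rw [sgn_neg_iff cs ht] at h1
      omega

lemma sgn_formula {a : W} (u : W) (i : B) (ha : a = u * σ i * u⁻¹) (x : W) :
    sgn cs a x = eps (σ i) (u⁻¹ * x * u) * sgn cs u⁻¹ (a * x * a) * sgn cs u⁻¹ x := by
  have hsplit : a = u * (σ i * u⁻¹) := by rw [ha, mul_assoc]
  have h1 : sgn cs a x = sgn cs u ((σ i * u⁻¹) * x * (σ i * u⁻¹)⁻¹) * sgn cs (σ i * u⁻¹) x := by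
    nth_rewrite 1 [hsplit]
    rw [sgn_cocycle]
  have hA : (σ i * u⁻¹) * x * (σ i * u⁻¹)⁻¹ = u⁻¹ * (a * x * a) * u := by
    rw [mul_inv_rev, inv_inv, cs.inv_simple, ha]
    group
  have h2 : sgn cs (σ i * u⁻¹) x = sgn cs (σ i) (u⁻¹ * x * u) * sgn cs u⁻¹ x := by
    rw [sgn_cocycle, inv_inv]
  rw [h1, hA, sgn_conj_inv, h2, sgn_simple]
  rw [mul_comm (sgn cs u⁻¹ (a * x * a))]
  rw [mul_assoc, mul_comm (sgn cs u⁻¹ x), ← mul_assoc]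

lemma sgn_pos_of_commute {a x : W} (ha : cs.IsReflection a) (hx : x ≠ a)
    (hcomm : a * x = x * a) : sgn cs a x = 1 := by
  have hself := ha.mul_self
  obtain ⟨u, i, hui⟩ := ha
  rw [sgn_formula cs u i hui x]
  have haxa : a * x * a = x := by
    rw [hcomm, mul_assoc, hself, mul_one]
  rw [haxa]
  have heps : eps (σ i) (u⁻¹ * x * u) = 1 := by
    unfold eps
    rw [if_neg]
    intro h
    apply hx
    have := congrArg (fun y => u * y * u⁻¹) h
    rw [← hui] at this
    rw [← this]
    group
  rw [heps, one_mul, unit_mul_self]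

lemma mem_rightInvSeq_of_sgn_neg {ω : List B} {t : W} (h : sgn cs (π ω) t = -1) :
    t ∈ cs.rightInvSeq ω := by
  have hcount := (sgn_wordProd cs ω t).symm.trans h
  by_contra hmem
  rw [List.count_eq_zero_of_not_mem hmem, pow_zero] at hcount
  exact (by decide : ((1 : ℤˣ) ≠ -1)) hcount

lemma left_exchange {i : B} {ν : List B} (h : ℓ (σ i * π ν) < ℓ (π ν)) :
    ∃ j, j < ν.length ∧ σ i * π ν = π (ν.eraseIdx j) := by
  have hsgninv : sgn cs (π ν.reverse) (σ i) = -1 := by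
    rw [cs.wordProd_reverse, sgn_neg_iff cs (cs.isReflection_simple i)]
    have heq : (π ν)⁻¹ * σ i = (σ i * π ν)⁻¹ := by rw [mul_inv_rev, cs.inv_simple]
    rw [heq, cs.length_inv, cs.length_inv]
    exact h
  have hmem := mem_rightInvSeq_of_sgn_neg cs hsgninv
  rw [cs.rightInvSeq_reverse, List.mem_reverse] at hmem
  obtain ⟨j, hj, hget⟩ := List.mem_iff_getElem.mp hmem
  rw [cs.length_leftInvSeq] at hj
  refine ⟨j, hj, ?_⟩
  have hh := cs.getD_leftInvSeq_mul_wordProd ν j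
  rw [List.getD_eq_getElem _ 1 (by rw [cs.length_leftInvSeq]; exact hj), hget] at hh
  exact hh

lemma lifting {w : W} {i : B} (h1 : ℓ (σ i * w) < ℓ w) (h2 : ℓ (w * σ i) < ℓ w)
    (h3 : ℓ w ≤ ℓ (σ i * w * σ i)) : σ i * w = w * σ i := by
  have hlsw : ℓ (σ i * w) + 1 = ℓ w := by
    rcases cs.length_simple_mul w i with h | h
    · omega
    · exact h
  have hw : σ i * (σ i * w) = w := cs.simple_mul_simple_cancel_left i
  have hus : ℓ ((σ i * w) * σ i) = ℓ (σ i * w) + 1 := by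
    rcases cs.length_mul_simple (σ i * w) i with h | h
    · exact h
    · exfalso
      have hgee : ℓ w ≤ ℓ (σ i * w * σ i) := h3
      omega
  obtain ⟨ωu, hred, hωu⟩ := cs.exists_reduced_word' (σ i * w)
  have hπ : π (ωu ++ [i]) = (σ i * w) * σ i := by
    rw [cs.wordProd_append, ← hωu]
    congr 1
    rw [cs.wordProd_cons, cs.wordProd_nil, mul_one]
  have hlen : (ωu ++ [i]).length = ωu.length + 1 := by simp
  have hredlen : ωu.length = ℓ (σ i * w) := by
    have := hred
    unfold CoxeterSystem.IsReduced at this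
    rw [← hωu] at this
    exact this.symm
  have hdesc : ℓ (σ i * π (ωu ++ [i])) < ℓ (π (ωu ++ [i])) := by
    rw [hπ]
    have he1 : σ i * ((σ i * w) * σ i) = w * σ i := by
      rw [← mul_assoc, ← mul_assoc, cs.simple_mul_simple_self, one_mul]
    rw [he1, hus]
    omega
  obtain ⟨j, hj, hex⟩ := left_exchange cs hdesc
  rw [hπ] at hex
  have he1 : σ i * ((σ i * w) * σ i) = w * σ i := by
    rw [← mul_assoc, ← mul_assoc, cs.simple_mul_simple_self, one_mul]
  rw [he1] at hex
  rcases Nat.lt_or_ge j ωu.length with hlt | hge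
  · exfalso
    rw [List.eraseIdx_append_of_lt_length hlt] at hex
    rw [cs.wordProd_append] at hex
    have hwi : π [i] = σ i := by rw [cs.wordProd_cons, cs.wordProd_nil, mul_one]
    rw [hwi] at hex
    have hweq : w = π (ωu.eraseIdx j) := by
      have := congrArg (fun x => x * σ i) hex
      rwa [mul_assoc, cs.simple_mul_simple_self, mul_one, mul_assoc,
        cs.simple_mul_simple_self, mul_one] at this
    have hle : ℓ w ≤ (ωu.eraseIdx j).length := by
      rw [hweq]; exact cs.length_wordProd_le _
    have hlen2 : (ωu.eraseIdx j).length + 1 = ωu.length :=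
      List.length_eraseIdx_add_one hlt
    omega
  · have hjeq : j = ωu.length := by
      rw [hlen] at hj
      omega
    rw [hjeq, List.eraseIdx_append_of_length_le (le_refl _)] at hex
    simp only [Nat.sub_self] at hex
    rw [List.eraseIdx_cons_zero, List.append_nil] at hex
    rw [← hωu] at hex
    exact hex.symm

lemma conj_simple_length {t : W} (ht : cs.IsReflection t) {i : B} (hne : σ i ≠ t)
    (h : ℓ (σ i * t) < ℓ t) : ℓ (σ i * t * σ i) + 2 = ℓ t := by
  have hts : ℓ (t * σ i) < ℓ t := by
    have heq : t * σ i = (σ i * t)⁻¹ := by rw [mul_inv_rev, ht.inv, cs.inv_simple]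
    rw [heq, cs.length_inv]
    exact h
  have h1 : ℓ (σ i * t) + 1 = ℓ t := by
    rcases cs.length_simple_mul t i with h' | h'
    · omega
    · exact h'
  rcases cs.length_mul_simple (σ i * t) i with h2 | h2
  · exfalso
    have hlift : σ i * t = t * σ i := lifting cs h hts (by omega)
    have hsgn := sgn_pos_of_commute cs ht (x := σ i) hne (by rw [← hlift])
    rw [sgn_pos_iff cs (cs.isReflection_simple i)] at hsgn
    omega
  · omega

lemma length_conj_simple_le (x : W) (j : B) : ℓ (x * σ j * x⁻¹) ≤ 2 * ℓ x + 1 := by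
  have h1 := cs.length_mul_le (x * σ j) x⁻¹
  have h2 := cs.length_mul_le x (σ j)
  rw [cs.length_inv] at h1
  rw [cs.length_simple] at h2
  omega

lemma exists_min_conjugator {t : W} (ht : cs.IsReflection t) :
    ∃ (w : W) (i : B), t = w * σ i * w⁻¹ ∧ ℓ t = 2 * ℓ w + 1 := by
  generalize hn : ℓ t = n
  induction n using Nat.strong_induction_on generalizing t with
  | _ n ih =>
  have hodd := ht.odd_length
  rw [hn] at hodd
  rcases Nat.eq_or_lt_of_le (hodd.pos) with h1 | h1
  · -- n = 1
    have hn1 : ℓ t = 1 := by omega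
    obtain ⟨i, hi⟩ := (cs.length_eq_one_iff).mp hn1
    refine ⟨1, i, by simp [hi], ?_⟩
    rw [cs.length_one]
    omega
  · -- n ≥ 2, so n ≥ 3 by oddness
    have hn3 : 3 ≤ n := by
      rcases hodd with ⟨k, hk⟩
      omega
    have ht1 : t ≠ 1 := by
      intro hh
      rw [hh, cs.length_one] at hn
      omega
    obtain ⟨i, hi⟩ := cs.exists_leftDescent_of_ne_one ht1
    have hdesc : ℓ (σ i * t) < ℓ t := hi
    have hnei : σ i ≠ t := by
      intro hh
      rw [← hh, cs.length_simple] at hn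
      omega
    have hF := conj_simple_length cs ht hnei hdesc
    have ht' : cs.IsReflection (σ i * t * σ i) := by
      have hc := ht.conj (σ i)
      rwa [cs.inv_simple] at hc
    obtain ⟨w', i', hw', hlen'⟩ := ih (ℓ (σ i * t * σ i)) (by omega) ht' rfl
    have hconj : t = (σ i * w') * σ i' * (σ i * w')⁻¹ := by
      have hback : σ i * (σ i * t * σ i) * σ i = t := by
        rw [← mul_assoc, ← mul_assoc, cs.simple_mul_simple_self, one_mul, mul_assoc,
          cs.simple_mul_simple_self, mul_one]
      rw [← hback, hw']
      rw [mul_inv_rev, cs.inv_simple]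
      simp only [mul_assoc]
    have hlsw' : ℓ (σ i * w') = ℓ w' + 1 := by
      rcases cs.length_simple_mul w' i with h' | h'
      · exact h'
      · exfalso
        have hle := length_conj_simple_le cs (σ i * w') i'
        rw [← hconj] at hle
        omega
    refine ⟨σ i * w', i', hconj, ?_⟩
    rw [hlsw']
    omega

section Dihedral

variable {t₁ t₂ : W}

/-- The reflections of the dihedral reflection subgroup generated by `t₁, t₂`. -/
noncomputable def rr (t₁ t₂ : W) (m : ℤ) : W := (t₁ * t₂) ^ m * t₁

variable (ht₁ : cs.IsReflection t₁) (ht₂ : cs.IsReflection t₂) (hne : t₁ ≠ t₂)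

include ht₁ ht₂

lemma conj_c_zpow (m : ℤ) : t₁ * (t₁ * t₂) ^ m * t₁ = (t₁ * t₂) ^ (-m) := by
  have hbase : (MulAut.conj t₁) (t₁ * t₂) = (t₁ * t₂)⁻¹ := by
    rw [MulAut.conj_apply, mul_inv_rev, ht₁.inv, ht₂.inv]
    simp only [← mul_assoc]
    rw [ht₁.mul_self, one_mul]
  have h := map_zpow (MulAut.conj t₁) (t₁ * t₂) m
  rw [hbase, MulAut.conj_apply, ht₁.inv] at h
  rw [h, inv_zpow, zpow_neg]

lemma t1_mul_c_zpow (m : ℤ) : t₁ * (t₁ * t₂) ^ m = (t₁ * t₂) ^ (-m) * t₁ := by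
  have h := conj_c_zpow cs ht₁ ht₂ m
  have h2 := congrArg (fun x => x * t₁) h
  rwa [mul_assoc, ht₁.mul_self, mul_one] at h2

lemma c_zpow_mul_t1 (m : ℤ) : (t₁ * t₂) ^ m * t₁ = t₁ * (t₁ * t₂) ^ (-m) := by
  have h := t1_mul_c_zpow cs ht₁ ht₂ (-m)
  rw [neg_neg] at h
  exact h.symm

lemma rr_mul_rr (m k : ℤ) : rr t₁ t₂ m * rr t₁ t₂ k = (t₁ * t₂) ^ (m - k) := by
  unfold rr
  calc ((t₁ * t₂) ^ m * t₁) * ((t₁ * t₂) ^ k * t₁)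
      = (t₁ * t₂) ^ m * ((t₁ * (t₁ * t₂) ^ k) * t₁) := by simp only [mul_assoc]
    _ = (t₁ * t₂) ^ m * (((t₁ * t₂) ^ (-k) * t₁) * t₁) := by rw [t1_mul_c_zpow cs ht₁ ht₂ k]
    _ = (t₁ * t₂) ^ m * (t₁ * t₂) ^ (-k) := by rw [mul_assoc, ht₁.mul_self, mul_one]
    _ = (t₁ * t₂) ^ (m - k) := by rw [← zpow_add, ← sub_eq_add_neg]

lemma c_mul_rr (m : ℤ) : (t₁ * t₂) * rr t₁ t₂ m = rr t₁ t₂ (m + 1) := by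
  unfold rr
  rw [← mul_assoc, ← zpow_one_add, add_comm]

lemma rr_isReflection (m : ℤ) : cs.IsReflection (rr t₁ t₂ m) := by
  rcases Int.even_or_odd m with ⟨k, hk⟩ | ⟨k, hk⟩
  · have heq : rr t₁ t₂ m = (t₁ * t₂) ^ k * t₁ * ((t₁ * t₂) ^ k)⁻¹ := by
      unfold rr
      rw [hk]
      calc (t₁ * t₂) ^ (k + k) * t₁ = (t₁ * t₂) ^ k * ((t₁ * t₂) ^ k * t₁) := by
            rw [zpow_add, mul_assoc]
        _ = (t₁ * t₂) ^ k * (t₁ * (t₁ * t₂) ^ (-k)) := by rw [c_zpow_mul_t1 cs ht₁ ht₂ k]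
        _ = (t₁ * t₂) ^ k * t₁ * ((t₁ * t₂) ^ k)⁻¹ := by rw [zpow_neg, mul_assoc]
    rw [heq]
    exact ht₁.conj _
  · have hx : cs.IsReflection (t₁ * t₂ * t₁) := by
      have h := (ht₂.conj t₁)
      rwa [ht₁.inv] at h
    have heq : rr t₁ t₂ m = (t₁ * t₂) ^ k * (t₁ * t₂ * t₁) * ((t₁ * t₂) ^ k)⁻¹ := by
      unfold rr
      rw [hk]
      calc (t₁ * t₂) ^ (2 * k + 1) * t₁
          = (t₁ * t₂) ^ (k + 1) * ((t₁ * t₂) ^ k * t₁) := by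
            rw [← mul_assoc, ← zpow_add]
            congr 2
            ring
        _ = (t₁ * t₂) ^ (k + 1) * (t₁ * (t₁ * t₂) ^ (-k)) := by rw [c_zpow_mul_t1 cs ht₁ ht₂ k]
        _ = ((t₁ * t₂) ^ k * (t₁ * t₂)) * (t₁ * (t₁ * t₂) ^ (-k)) := by rw [← zpow_add_one]
        _ = (t₁ * t₂) ^ k * (t₁ * t₂ * t₁) * ((t₁ * t₂) ^ k)⁻¹ := by
            rw [zpow_neg]
            simp only [mul_assoc]
    rw [heq]
    exact hx.conj _

lemma rr_conj_rr (p m : ℤ) :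
    rr t₁ t₂ p * rr t₁ t₂ m * rr t₁ t₂ p = rr t₁ t₂ (2 * p - m) := by
  rw [rr_mul_rr cs ht₁ ht₂ p m]
  show (t₁ * t₂) ^ (p - m) * ((t₁ * t₂) ^ p * t₁) = rr t₁ t₂ (2 * p - m)
  rw [← mul_assoc, ← zpow_add]
  show rr t₁ t₂ (p - m + p) = rr t₁ t₂ (2 * p - m)
  congr 1
  ring

lemma c_conj_rr (m : ℤ) : (t₁ * t₂) * rr t₁ t₂ m * (t₁ * t₂)⁻¹ = rr t₁ t₂ (m + 2) := by
  rw [c_mul_rr cs ht₁ ht₂ m]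
  show ((t₁ * t₂) ^ (m+1) * t₁) * (t₁ * t₂)⁻¹ = rr t₁ t₂ (m + 2)
  rw [mul_assoc, ← zpow_neg_one, t1_mul_c_zpow cs ht₁ ht₂ (-1), neg_neg, zpow_one,
    ← mul_assoc, ← zpow_add_one]
  show rr t₁ t₂ (m + 1 + 1) = rr t₁ t₂ (m + 2)
  congr 1
  ring

lemma cinv_conj_rr (m : ℤ) : (t₁ * t₂)⁻¹ * rr t₁ t₂ m * (t₁ * t₂) = rr t₁ t₂ (m - 2) := by
  have h := c_conj_rr cs ht₁ ht₂ (m - 2)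
  rw [show m - 2 + 2 = m from by ring] at h
  rw [← h]
  group

lemma rr_zero : rr t₁ t₂ 0 = t₁ := by unfold rr; rw [zpow_zero, one_mul]

lemma rr_neg_one : rr t₁ t₂ (-1) = t₂ := by
  unfold rr
  rw [zpow_neg_one, mul_inv_rev, ht₁.inv, ht₂.inv, mul_assoc, ht₁.mul_self, mul_one]

lemma c_zpow_mul_rr (j m : ℤ) : (t₁ * t₂) ^ j * rr t₁ t₂ m = rr t₁ t₂ (j + m) := by
  unfold rr
  rw [← mul_assoc, ← zpow_add]

include hne

lemma rr_succ_ne (p : ℤ) : rr t₁ t₂ (p + 1) ≠ rr t₁ t₂ p := by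
  intro h
  have h2 : rr t₁ t₂ (p+1) * rr t₁ t₂ p = 1 := by
    rw [h]; exact (rr_isReflection cs ht₁ ht₂ p).mul_self
  rw [rr_mul_rr cs ht₁ ht₂, show (p + 1 - p : ℤ) = 1 from by ring, zpow_one] at h2
  apply hne
  have h3 := congrArg (fun x => t₁ * x) h2
  rw [← mul_assoc, ht₁.mul_self, one_mul, mul_one] at h3
  exact h3.symm

lemma key_contradiction (z : W)
    (H1 : ∀ m : ℤ, sgn cs z (rr t₁ t₂ m) = 1)
    (H2 : ∀ m : ℤ, sgn cs (z * (t₁ * t₂)) (rr t₁ t₂ m) = 1) : False := by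
  have Hc : ∀ m : ℤ, sgn cs (t₁ * t₂) (rr t₁ t₂ m) = 1 := by
    intro m
    have h := sgn_cocycle cs z (t₁ * t₂) (rr t₁ t₂ m)
    rw [H2 m, c_conj_rr cs ht₁ ht₂ m, H1 (m+2), one_mul] at h
    exact h.symm
  have Hcinv : ∀ m : ℤ, sgn cs (t₁ * t₂)⁻¹ (rr t₁ t₂ m) = 1 := by
    intro m
    have h := sgn_cocycle cs (t₁ * t₂)⁻¹ (t₁ * t₂) (rr t₁ t₂ (m - 2))
    rw [inv_mul_cancel, sgn_one, c_conj_rr cs ht₁ ht₂ (m-2), Hc (m-2), mul_one,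
      show m - 2 + 2 = m from by ring] at h
    exact h.symm
  have Hpow : ∀ j : ℤ, ∀ m : ℤ, sgn cs ((t₁ * t₂) ^ j) (rr t₁ t₂ m) = 1 := by
    intro j
    induction j using Int.induction_on with
    | zero => intro m; rw [zpow_zero, sgn_one]
    | succ k ihk =>
      intro m
      have h := sgn_cocycle cs ((t₁ * t₂) ^ (k : ℤ)) (t₁ * t₂) (rr t₁ t₂ m)
      rw [c_conj_rr cs ht₁ ht₂ m, ihk (m+2), Hc m, one_mul] at h
      rw [zpow_add_one]
      exact h
    | pred k ihk =>
      intro m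
      have h := sgn_cocycle cs ((t₁ * t₂) ^ (-k : ℤ)) (t₁ * t₂)⁻¹ (rr t₁ t₂ m)
      rw [inv_inv, cinv_conj_rr cs ht₁ ht₂ m, ihk (m-2), Hcinv m, one_mul] at h
      rw [zpow_sub_one]
      exact h
  have Hlen : ∀ (k j : ℤ), ℓ ((t₁ * t₂) ^ j) < ℓ (rr t₁ t₂ k) := by
    intro k j
    have h := Hpow j (k - j)
    rw [sgn_pos_iff cs (rr_isReflection cs ht₁ ht₂ (k - j))] at h
    rwa [c_zpow_mul_rr cs ht₁ ht₂ j (k - j), show j + (k - j) = k from by ring] at h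
  have hSne : (Set.range fun m : ℤ => ℓ (rr t₁ t₂ m)).Nonempty := ⟨ℓ (rr t₁ t₂ 0), 0, rfl⟩
  obtain ⟨p, hp⟩ := Nat.sInf_mem hSne
  have hmin : ∀ k : ℤ, ℓ (rr t₁ t₂ p) ≤ ℓ (rr t₁ t₂ k) := by
    intro k
    exact le_of_eq_of_le hp (Nat.sInf_le ⟨k, rfl⟩)
  obtain ⟨w, i, hcon, hlen2⟩ := exists_min_conjugator cs (rr_isReflection cs ht₁ ht₂ p)
  have hsgnneg : sgn cs (rr t₁ t₂ p) (rr t₁ t₂ (p+1)) = -1 := by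
    rw [sgn_neg_iff cs (rr_isReflection cs ht₁ ht₂ (p+1))]
    rw [rr_mul_rr cs ht₁ ht₂ p (p+1)]
    exact Hlen p (p - (p+1))
  have hform := sgn_formula cs w i hcon (rr t₁ t₂ (p+1))
  have heps : eps (σ i) (w⁻¹ * rr t₁ t₂ (p+1) * w) = 1 := by
    unfold eps
    rw [if_neg]
    intro h
    apply rr_succ_ne cs ht₁ ht₂ hne p
    rw [hcon, ← h]
    group
  have hmid : rr t₁ t₂ p * rr t₁ t₂ (p+1) * rr t₁ t₂ p = rr t₁ t₂ (p - 1) := by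
    rw [rr_conj_rr cs ht₁ ht₂ p (p+1)]
    congr 1
    ring
  rw [hsgnneg, heps, hmid, one_mul] at hform
  have hone : ∃ m' : ℤ, sgn cs w⁻¹ (rr t₁ t₂ m') = -1 := by
    rcases unit_dichotomy (sgn cs w⁻¹ (rr t₁ t₂ (p-1))) with h1 | h1
    · rcases unit_dichotomy (sgn cs w⁻¹ (rr t₁ t₂ (p+1))) with h2 | h2
      · exfalso
        rw [h1, h2, one_mul] at hform
        exact (by decide : ¬((-1:ℤˣ) = 1)) hform
      · exact ⟨p+1, h2⟩
    · exact ⟨p-1, h1⟩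
  obtain ⟨m', hm'⟩ := hone
  rw [sgn_neg_iff cs (rr_isReflection cs ht₁ ht₂ m'), cs.length_inv] at hm'
  have hup : ℓ (rr t₁ t₂ m') ≤ ℓ w + ℓ (w⁻¹ * rr t₁ t₂ m') := by
    have h := cs.length_mul_le w (w⁻¹ * rr t₁ t₂ m')
    rwa [mul_inv_cancel_left] at h
  have hm2 := hmin m'
  omega

lemma exists_descent (z : W) :
    ∃ m : ℤ, ℓ (z * rr t₁ t₂ m) < ℓ z ∨ ℓ (z * rr t₁ t₂ m) < ℓ (z * (t₁ * t₂)) := by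
  by_contra hcon
  push_neg at hcon
  refine key_contradiction cs ht₁ ht₂ hne z ?_ ?_
  · intro m
    rw [sgn_pos_iff cs (rr_isReflection cs ht₁ ht₂ m)]
    have h1 := (hcon m).1
    have h2 := (rr_isReflection cs ht₁ ht₂ m).length_mul_left_ne z
    omega
  · intro m
    rw [sgn_pos_iff cs (rr_isReflection cs ht₁ ht₂ m)]
    have heq : z * (t₁ * t₂) * rr t₁ t₂ m = z * rr t₁ t₂ (m+1) := by
      rw [mul_assoc, c_mul_rr cs ht₁ ht₂ m]
    rw [heq]
    have h1 := (hcon (m+1)).2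
    have h2 := (rr_isReflection cs ht₁ ht₂ m).length_mul_left_ne (z * (t₁ * t₂))
    rw [heq] at h2
    omega

lemma hurwitz_move_step (m : ℤ) :
    HurwitzMove [rr t₁ t₂ m, rr t₁ t₂ (m-1)] [rr t₁ t₂ (m+1), rr t₁ t₂ m] := by
  refine ⟨[], [], rr t₁ t₂ m, rr t₁ t₂ (m-1), by simp, ?_⟩
  have h : rr t₁ t₂ m * rr t₁ t₂ (m-1) * rr t₁ t₂ m = rr t₁ t₂ (m+1) := by
    rw [rr_mul_rr cs ht₁ ht₂ m (m-1), show m - (m-1) = 1 from by ring, zpow_one,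
      c_mul_rr cs ht₁ ht₂ m]
  simp [h]

lemma hurwitz_orbit (m : ℤ) :
    Relation.EqvGen HurwitzMove [t₁, t₂] [rr t₁ t₂ m, rr t₁ t₂ (m-1)] := by
  induction m using Int.induction_on with
  | zero =>
    have h0 : rr t₁ t₂ (0:ℤ) = t₁ := rr_zero cs ht₁ ht₂
    have h1 : rr t₁ t₂ ((0:ℤ)-1) = t₂ := by
      rw [show ((0:ℤ)-1) = -1 from by ring]
      exact rr_neg_one cs ht₁ ht₂
    rw [h0, h1]
    exact Relation.EqvGen.refl _
  | succ k ih =>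
    refine Relation.EqvGen.trans _ _ _ ih ?_
    have hmove := hurwitz_move_step cs ht₁ ht₂ hne (k : ℤ)
    have e1 : ((k : ℤ) + 1) - 1 = (k : ℤ) := by ring
    rw [e1]
    exact Relation.EqvGen.rel _ _ hmove
  | pred k ih =>
    refine Relation.EqvGen.trans _ _ _ ih ?_
    have hmove := hurwitz_move_step cs ht₁ ht₂ hne (-(k:ℤ) - 1)
    have e1 : (-(k:ℤ) - 1) + 1 = -(k:ℤ) := by ring
    rw [e1] at hmove
    exact Relation.EqvGen.symm _ _ (Relation.EqvGen.rel _ _ hmove)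

omit hne in
lemma rr_mem_closure (m : ℤ) : rr t₁ t₂ m ∈ Subgroup.closure ({t₁, t₂} : Set W) := by
  have h1 : t₁ ∈ Subgroup.closure ({t₁, t₂} : Set W) :=
    Subgroup.subset_closure (by simp)
  have h2 : t₂ ∈ Subgroup.closure ({t₁, t₂} : Set W) :=
    Subgroup.subset_closure (by simp)
  exact Subgroup.mul_mem _ (Subgroup.zpow_mem _ (Subgroup.mul_mem _ h1 h2) m) h1

end Dihedral

end HurwitzAux

/-- Let `(W,S)` be a Coxeter system, let `t₁ ≠ t₂` be reflections and
`z ∈ W` with `ℓ(z) < ℓ(z t₁)` and `ℓ(z t₁ t₂) < ℓ(z t₁)`.  Then there exist reflections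
`t₁', t₂' ∈ ⟨t₁, t₂⟩` with `t₁' t₂' = t₁ t₂`, lying in the Hurwitz orbit of `(t₁, t₂)`
under `B₂`, such that `ℓ(z t₁') < max(ℓ(z), ℓ(z t₁ t₂)) < ℓ(z t₁)`, and one of:
`ℓ(z) < ℓ(z t₁') < ℓ(z t₁' t₂')`, or `ℓ(z) > ℓ(z t₁') > ℓ(z t₁' t₂')`, or
`ℓ(z) > ℓ(z t₁') < ℓ(z t₁' t₂')`. -/
theorem exists_hurwitz_replacement_dihedral
    {W : Type*} [Group W] {B : Type*}
    (M : CoxeterMatrix B) (cs : CoxeterSystem M W)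
    (t₁ t₂ z : W) (h₁ : cs.IsReflection t₁) (h₂ : cs.IsReflection t₂) (hne : t₁ ≠ t₂)
    (hup : cs.length z < cs.length (z * t₁))
    (hdown : cs.length (z * t₁ * t₂) < cs.length (z * t₁)) :
    ∃ t₁' t₂' : W, cs.IsReflection t₁' ∧ cs.IsReflection t₂' ∧
      t₁' ∈ Subgroup.closure {t₁, t₂} ∧ t₂' ∈ Subgroup.closure {t₁, t₂} ∧
      t₁' * t₂' = t₁ * t₂ ∧
      Relation.EqvGen HurwitzMove [t₁, t₂] [t₁', t₂'] ∧
      cs.length (z * t₁') < max (cs.length z) (cs.length (z * t₁ * t₂)) ∧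
      max (cs.length z) (cs.length (z * t₁ * t₂)) < cs.length (z * t₁) ∧
      ((cs.length z < cs.length (z * t₁') ∧
          cs.length (z * t₁') < cs.length (z * t₁' * t₂')) ∨
        (cs.length z > cs.length (z * t₁') ∧
          cs.length (z * t₁') > cs.length (z * t₁' * t₂')) ∨
        (cs.length z > cs.length (z * t₁') ∧
          cs.length (z * t₁') < cs.length (z * t₁' * t₂'))) := by
  classical
  obtain ⟨m₀, hm₀⟩ := HurwitzAux.exists_descent cs h₁ h₂ hne z
  have hassoc : z * t₁ * t₂ = z * (t₁ * t₂) := mul_assoc z t₁ t₂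
  refine ⟨HurwitzAux.rr t₁ t₂ m₀, HurwitzAux.rr t₁ t₂ (m₀ - 1),
    HurwitzAux.rr_isReflection cs h₁ h₂ m₀, HurwitzAux.rr_isReflection cs h₁ h₂ (m₀ - 1),
    HurwitzAux.rr_mem_closure cs h₁ h₂ m₀, HurwitzAux.rr_mem_closure cs h₁ h₂ (m₀ - 1),
    ?_, HurwitzAux.hurwitz_orbit cs h₁ h₂ hne m₀, ?_, ?_, ?_⟩
  · rw [HurwitzAux.rr_mul_rr cs h₁ h₂ m₀ (m₀ - 1),
      show m₀ - (m₀ - 1) = 1 from by ring, zpow_one]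
  · rw [hassoc]
    rcases hm₀ with h | h
    · exact lt_max_of_lt_left h
    · exact lt_max_of_lt_right h
  · exact max_lt hup hdown
  · have hprod : HurwitzAux.rr t₁ t₂ m₀ * HurwitzAux.rr t₁ t₂ (m₀ - 1) = t₁ * t₂ := by
      rw [HurwitzAux.rr_mul_rr cs h₁ h₂ m₀ (m₀ - 1),
        show m₀ - (m₀ - 1) = 1 from by ring, zpow_one]
    have hC : z * HurwitzAux.rr t₁ t₂ m₀ * HurwitzAux.rr t₁ t₂ (m₀ - 1) = z * t₁ * t₂ := by
      rw [mul_assoc, hprod, hassoc]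
    have hAB := (HurwitzAux.rr_isReflection cs h₁ h₂ m₀).length_mul_left_ne z
    have hBC := (HurwitzAux.rr_isReflection cs h₁ h₂ (m₀ - 1)).length_mul_left_ne
      (z * HurwitzAux.rr t₁ t₂ m₀)
    rw [hC] at hBC
    have hBmax : cs.length (z * HurwitzAux.rr t₁ t₂ m₀)
        < max (cs.length z) (cs.length (z * t₁ * t₂)) := by
      rw [hassoc]
      rcases hm₀ with h | h
      · exact lt_max_of_lt_left h
      · exact lt_max_of_lt_right h
    rw [hC]
    rcases lt_max_iff.mp hBmax with h | h
    · -- ℓ (z * rr m₀) < ℓ z : case 2 or 3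
      rcases Nat.lt_or_ge (cs.length (z * t₁ * t₂)) (cs.length (z * HurwitzAux.rr t₁ t₂ m₀))
        with h2 | h2
      · right; left; exact ⟨h, h2⟩
      · right; right
        refine ⟨h, ?_⟩
        omega
    · -- ℓ (z * rr m₀) < ℓ (z * t₁ * t₂)
      rcases Nat.lt_or_ge (cs.length z) (cs.length (z * HurwitzAux.rr t₁ t₂ m₀)) with h2 | h2
      · left; exact ⟨h2, h⟩
      · right; right
        refine ⟨?_, h⟩
        omega
end

section
/- Let (W,S) be a Coxeter system of finite rank with reflection set T, and let c = s1⋯sn be a standard parabolic Coxeter element (a product of n pairwise distinct simple generators). Then any two factorizations c = t1⋯tn = t1'⋯tn' into reflections whose partial products are strictly increasing in S-length (ℓ(t1⋯t_k) < ℓ(t1⋯t_{k+1}) and ℓ(t1'⋯t_k') < ℓ(t1'⋯t_{k+1}') for all 0 ≤ k < n) lie in the same orbit under the Hurwitz action of the braid group B_n. -/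
open CoxeterSystem List

attribute [local instance] Classical.propDecidable
set_option linter.unusedSectionVars false

noncomputable section

namespace HurwitzAux

variable {W : Type*} [Group W]

def nu (a x : W) : ℤˣ := if x = a then -1 else 1

lemma nu_conj (c g x : W) : nu c (g * x * g⁻¹) = nu (g⁻¹ * c * g) x := by
  unfold nu
  congr 1
  simp only [eq_iff_iff]
  constructor
  · intro h; rw [← h]; group
  · intro h; rw [h]; group

lemma nu_mul_self (a x : W) : nu a x * nu a x = 1 := by unfold nu; split <;> simp

def ePfun (a : W) : W × ℤˣ → W × ℤˣ := fun p => (a * p.1 * a, nu a p.1 * p.2)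

lemma ePfun_invol {a : W} (ha : a * a = 1) : Function.Involutive (ePfun a) := by
  intro p
  have hinv : a⁻¹ = a := inv_eq_of_mul_eq_one_right ha
  unfold ePfun
  refine Prod.ext ?_ ?_
  · show a * (a * p.1 * a) * a = p.1
    calc a * (a * p.1 * a) * a = (a * a) * p.1 * (a * a) := by group
    _ = p.1 := by rw [ha]; group
  · show nu a (a * p.1 * a) * (nu a p.1 * p.2) = p.2
    have h2 : nu a (a * p.1 * a) = nu a p.1 := by
      nth_rewrite 1 [show a * p.1 * a = a * p.1 * a⁻¹ by rw [hinv]]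
      rw [nu_conj]
      congr 1
      rw [hinv]
      calc a * a * a = (a * a) * a := by group
      _ = a := by rw [ha]; group
    rw [h2, ← mul_assoc, nu_mul_self, one_mul]

def eP (a : W) (ha : a * a = 1) : Equiv.Perm (W × ℤˣ) :=
  Function.Involutive.toPerm (ePfun a) (ePfun_invol ha)

lemma eP_apply (a : W) (ha : a * a = 1) (p : W × ℤˣ) :
    eP a ha p = (a * p.1 * a, nu a p.1 * p.2) := rfl

lemma b_pow (q b : W) (hq : b * q = q⁻¹ * b) : ∀ r : ℕ, b * q ^ r = (q ^ r)⁻¹ * b := by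
  intro r
  induction r with
  | zero => simp
  | succ r ih =>
    calc b * q ^ (r + 1) = (b * q ^ r) * q := by rw [pow_succ, mul_assoc]
    _ = (q ^ r)⁻¹ * (b * q) := by rw [ih, mul_assoc]
    _ = ((q ^ r)⁻¹ * q⁻¹) * b := by rw [hq, mul_assoc]
    _ = (q ^ (r + 1))⁻¹ * b := by rw [pow_succ', mul_inv_rev]

lemma conj_b_pow (q b : W) (hq : b * q = q⁻¹ * b) (r : ℕ) :
    (q ^ r)⁻¹ * b * q ^ r = b * q ^ (2 * r) := by
  rw [← b_pow q b hq r, mul_assoc, ← pow_add, two_mul]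

lemma conj_qinv_b_pow (q b : W) (hq : b * q = q⁻¹ * b) (r : ℕ) :
    (q ^ r)⁻¹ * (q⁻¹ * b) * q ^ r = b * q ^ (2 * r + 1) := by
  have h1 : (q ^ r)⁻¹ * (q⁻¹ * b) = (q ^ (r+1))⁻¹ * b := by
    rw [pow_succ', mul_inv_rev, mul_assoc]
  rw [h1, ← b_pow q b hq (r+1), mul_assoc, ← pow_add]
  congr 2
  omega

lemma eP_mul_pow {a b : W} (ha : a * a = 1) (hb : b * b = 1) (k : ℕ) (p : W × ℤˣ) :
    ((eP a ha * eP b hb) ^ k) p =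
      ((a * b) ^ k * p.1 * ((a * b) ^ k)⁻¹,
        (∏ j ∈ Finset.range (2 * k), nu (b * (a * b) ^ j) p.1) * p.2) := by
  have hainv : a⁻¹ = a := inv_eq_of_mul_eq_one_right ha
  have hbinv : b⁻¹ = b := inv_eq_of_mul_eq_one_right hb
  have hq : b * (a * b) = (a * b)⁻¹ * b := by
    rw [mul_inv_rev, hainv, hbinv]; group
  induction k with
  | zero => simp
  | succ k ih =>
    rw [pow_succ', Equiv.Perm.mul_apply, ih, Equiv.Perm.mul_apply, eP_apply, eP_apply]
    set q := a * b with hqdef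
    clear_value q
    refine Prod.ext ?_ ?_
    · show a * (b * (q ^ k * p.1 * (q ^ k)⁻¹) * b) * a = q ^ (k+1) * p.1 * (q ^ (k+1))⁻¹
      have h1 : a * (b * (q ^ k * p.1 * (q ^ k)⁻¹) * b) * a
          = q * (q ^ k * p.1 * (q ^ k)⁻¹) * q⁻¹ := by
        rw [hqdef, mul_inv_rev, hainv, hbinv]; group
      rw [h1, pow_succ', mul_inv_rev]
      group
    · show nu a (b * (q ^ k * p.1 * (q ^ k)⁻¹) * b) *
          (nu b (q ^ k * p.1 * (q ^ k)⁻¹) *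
            ((∏ j ∈ Finset.range (2 * k), nu (b * q ^ j) p.1) * p.2))
        = (∏ j ∈ Finset.range (2 * (k+1)), nu (b * q ^ j) p.1) * p.2
      have e1 : nu b (q ^ k * p.1 * (q ^ k)⁻¹) = nu (b * q ^ (2 * k)) p.1 := by
        rw [nu_conj, conj_b_pow q b hq]
      have e2 : nu a (b * (q ^ k * p.1 * (q ^ k)⁻¹) * b)
          = nu (b * q ^ (2 * k + 1)) p.1 := by
        have h3 : b * (q ^ k * p.1 * (q ^ k)⁻¹) * b
            = (b * q ^ k) * p.1 * (b * q ^ k)⁻¹ := by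
          rw [mul_inv_rev, hbinv]; group
        rw [h3, nu_conj]
        congr 1
        have h4 : (b * q ^ k)⁻¹ * a * (b * q ^ k)
            = (q ^ k)⁻¹ * (b * a * b) * q ^ k := by
          rw [mul_inv_rev, hbinv]; group
        have h5 : b * a * b = q⁻¹ * b := by
          rw [hqdef, mul_inv_rev, hainv, hbinv]
        rw [h4, h5, conj_qinv_b_pow q b hq]
      rw [e1, e2]
      have hr : 2 * (k + 1) = (2 * k) + 1 + 1 := by ring
      rw [hr, Finset.prod_range_succ, Finset.prod_range_succ]
      simp only [mul_assoc, mul_comm, mul_left_comm]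

lemma eP_liftable {a b : W} (ha : a * a = 1) (hb : b * b = 1) (m : ℕ)
    (hm : (a * b) ^ m = 1) : (eP a ha * eP b hb) ^ m = 1 := by
  apply Equiv.ext
  intro p
  rw [eP_mul_pow ha hb m p, hm, Equiv.Perm.one_apply]
  refine Prod.ext ?_ ?_
  · simp
  · show (∏ j ∈ Finset.range (2 * m), nu (b * (a * b) ^ j) p.1) * p.2 = p.2
    have h1 : ∀ j, nu (b * (a * b) ^ (m + j)) p.1 = nu (b * (a * b) ^ j) p.1 := by
      intro j
      rw [pow_add, hm, one_mul]
    rw [two_mul, Finset.prod_range_add]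
    simp only [h1]
    rw [Int.units_mul_self, one_mul]


section CS

variable {B : Type*} {M : CoxeterMatrix B} (cs : CoxeterSystem M W)

/-- The sign representation of `W` on `W × ℤˣ`. -/
def phi : W →* Equiv.Perm (W × ℤˣ) :=
  cs.lift ⟨fun i => eP (cs.simple i) (cs.simple_mul_simple_self i),
    fun i i' => eP_liftable _ _ (M i i') (cs.simple_mul_simple_pow i i')⟩

lemma phi_simple (i : B) :
    phi cs (cs.simple i) = eP (cs.simple i) (cs.simple_mul_simple_self i) :=
  cs.lift_apply_simple _ i

lemma phi_wordProd (ω : List B) (p : W × ℤˣ) :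
    phi cs (cs.wordProd ω) p =
      (cs.wordProd ω * p.1 * (cs.wordProd ω)⁻¹,
        ((cs.rightInvSeq ω).map (fun t => nu t p.1)).prod * p.2) := by
  induction ω with
  | nil => simp
  | cons i ω ih =>
    rw [cs.wordProd_cons, map_mul, Equiv.Perm.mul_apply, ih, phi_simple, eP_apply]
    have hris : cs.rightInvSeq (i :: ω) =
        ((cs.wordProd ω)⁻¹ * cs.simple i * cs.wordProd ω) :: cs.rightInvSeq ω := rfl
    rw [hris]
    refine Prod.ext ?_ ?_
    · show cs.simple i * (cs.wordProd ω * p.1 * (cs.wordProd ω)⁻¹) * cs.simple i = _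
      have : (cs.simple i * cs.wordProd ω)⁻¹ = (cs.wordProd ω)⁻¹ * cs.simple i := by
        rw [mul_inv_rev, cs.inv_simple]
      show _ = (cs.simple i * cs.wordProd ω) * p.1 * (cs.simple i * cs.wordProd ω)⁻¹
      rw [this]
      group
    · show nu (cs.simple i) (cs.wordProd ω * p.1 * (cs.wordProd ω)⁻¹) *
          (((cs.rightInvSeq ω).map (fun t => nu t p.1)).prod * p.2) = _
      rw [nu_conj, List.map_cons, List.prod_cons]
      simp [mul_assoc]

/-- The sign cocycle. -/
def Fsgn (w x : W) : ℤˣ := (phi cs w (x, 1)).2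

lemma Fsgn_word (ω : List B) (x : W) :
    Fsgn cs (cs.wordProd ω) x = ((cs.rightInvSeq ω).map (fun t => nu t x)).prod := by
  unfold Fsgn
  rw [phi_wordProd]
  simp

lemma phi_apply (w : W) (p : W × ℤˣ) :
    phi cs w p = (w * p.1 * w⁻¹, Fsgn cs w p.1 * p.2) := by
  obtain ⟨ω, rfl⟩ := cs.wordProd_surjective w
  rw [phi_wordProd, Fsgn_word]

lemma Fsgn_mul (u v x : W) :
    Fsgn cs (u * v) x = Fsgn cs u (v * x * v⁻¹) * Fsgn cs v x := by
  unfold Fsgn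
  rw [map_mul, Equiv.Perm.mul_apply, phi_apply cs v (x, 1), phi_apply]
  simp only [mul_one]
  rfl

lemma Fsgn_one (x : W) : Fsgn cs 1 x = 1 := by
  unfold Fsgn
  rw [map_one]
  rfl

lemma Fsgn_inv (w x : W) : Fsgn cs w⁻¹ (w * x * w⁻¹) = Fsgn cs w x := by
  have h := Fsgn_mul cs w⁻¹ w x
  rw [inv_mul_cancel, Fsgn_one] at h
  have h2 := congrArg (fun u => u * (Fsgn cs w x)) h
  rw [mul_assoc, Int.units_mul_self, mul_one, one_mul] at h2
  exact h2.symm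

lemma Fsgn_simple_self (i : B) : Fsgn cs (cs.simple i) (cs.simple i) = -1 := by
  have h : cs.simple i = cs.wordProd [i] := by rw [cs.wordProd_singleton]
  rw [h, Fsgn_word]
  rw [cs.rightInvSeq_singleton]
  simp only [List.map_cons, List.map_nil, List.prod_cons, List.prod_nil, mul_one]
  rw [← h]
  unfold nu
  simp

lemma Fsgn_reflection_self {t : W} (ht : cs.IsReflection t) : Fsgn cs t t = -1 := by
  obtain ⟨w, i, rfl⟩ := ht
  set t := w * cs.simple i * w⁻¹ with hts
  have h1 : t = w * (cs.simple i * w⁻¹) := by rw [hts]; group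
  have h2 : Fsgn cs t t
      = Fsgn cs w ((cs.simple i * w⁻¹) * t * (cs.simple i * w⁻¹)⁻¹) *
        Fsgn cs (cs.simple i * w⁻¹) t := by
    nth_rewrite 1 [h1]
    exact Fsgn_mul cs w (cs.simple i * w⁻¹) t
  have h3 : (cs.simple i * w⁻¹) * t * (cs.simple i * w⁻¹)⁻¹ = cs.simple i := by
    rw [mul_inv_rev, cs.inv_simple, inv_inv, hts]
    calc cs.simple i * w⁻¹ * (w * cs.simple i * w⁻¹) * (w * cs.simple i)
        = cs.simple i * cs.simple i * cs.simple i := by group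
    _ = cs.simple i := by rw [cs.simple_mul_simple_self, one_mul]
  have h4 : Fsgn cs (cs.simple i * w⁻¹) t
      = Fsgn cs (cs.simple i) (w⁻¹ * t * w) * Fsgn cs w⁻¹ t := by
    have := Fsgn_mul cs (cs.simple i) w⁻¹ t
    rwa [inv_inv] at this
  have h5 : w⁻¹ * t * w = cs.simple i := by
    rw [hts]
    group
  have h6 : Fsgn cs w⁻¹ t = Fsgn cs w (cs.simple i) := by
    rw [hts]
    exact Fsgn_inv cs w (cs.simple i)
  rw [h2, h3, h4, h5, h6, Fsgn_simple_self]
  calc Fsgn cs w (cs.simple i) * (-1 * Fsgn cs w (cs.simple i))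
      = -(Fsgn cs w (cs.simple i) * Fsgn cs w (cs.simple i)) := by
        rw [neg_one_mul, mul_neg]
  _ = -1 := by rw [Int.units_mul_self]

lemma mem_of_Fsgn_neg_one {w x : W} (h : Fsgn cs w x = -1) {ω : List B}
    (hω : cs.wordProd ω = w) : x ∈ cs.rightInvSeq ω := by
  by_contra hmem
  rw [← hω, Fsgn_word] at h
  have : ((cs.rightInvSeq ω).map (fun t => nu t x)).prod = 1 := by
    apply List.prod_eq_one
    intro y hy
    obtain ⟨t, htmem, rfl⟩ := List.mem_map.mp hy
    unfold nu
    rw [if_neg]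
    rintro rfl
    exact hmem htmem
  rw [this] at h
  exact absurd h (by decide)

/-- Strong exchange property. -/
theorem strong_exchange {w t : W} (ht : cs.IsReflection t)
    (hlt : cs.length (w * t) < cs.length w) {ω : List B} (hω : cs.wordProd ω = w) :
    t ∈ cs.rightInvSeq ω := by
  have hF : Fsgn cs w t = -1 := by
    rcases Int.units_eq_one_or (Fsgn cs w t) with h1 | h1
    · exfalso
      have hwt : Fsgn cs (w * t) t = -1 := by
        have := Fsgn_mul cs w t t
        rw [ht.inv] at this
        rw [show t * t * t = t by rw [ht.mul_self, one_mul]] at this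
        rw [this, Fsgn_reflection_self cs ht, h1, one_mul]
      obtain ⟨τ, hτred, hτ⟩ := cs.exists_reduced_word' (w * t)
      have hmem := mem_of_Fsgn_neg_one cs hwt hτ.symm
      have hinv := cs.isRightInversion_of_mem_rightInvSeq hτred hmem
      rw [← hτ] at hinv
      have : cs.length (w * t * t) < cs.length (w * t) := hinv.2
      rw [mul_assoc, ht.mul_self, mul_one] at this
      omega
    · exact h1
  exact mem_of_Fsgn_neg_one cs hF hω


/-- Bruhat-lifting-type lemma, via strong exchange. -/
lemma lifting_s12 {c t : W} {i : B} (ht : cs.IsReflection t) (hd : cs.IsRightDescent c i)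
    (hlt : cs.length (c * t) + 1 = cs.length c) :
    c * t = c * cs.simple i ∨ cs.length ((c * t) * cs.simple i) < cs.length (c * t) := by
  obtain ⟨τ, hτlen, hτprod⟩ := cs.exists_reduced_word (c * cs.simple i)
  have hdlen : cs.length (c * cs.simple i) + 1 = cs.length c := (cs.isRightDescent_iff).mp hd
  set ω := τ ++ [i] with hω
  have hπω : cs.wordProd ω = c := by
    rw [hω, cs.wordProd_append, cs.wordProd_singleton, ← hτprod,
      cs.simple_mul_simple_cancel_right]
  have hmem : t ∈ cs.rightInvSeq ω := strong_exchange cs ht (by omega) hπω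
  obtain ⟨j, hj, hget⟩ := List.mem_iff_getElem.mp hmem
  rw [cs.length_rightInvSeq] at hj
  have herase : c * t = cs.wordProd (ω.eraseIdx j) := by
    rw [← hπω, ← cs.wordProd_mul_getD_rightInvSeq ω j]
    congr 1
    rw [List.getD_eq_getElem _ 1 (by rw [cs.length_rightInvSeq]; exact hj)]
    exact hget.symm
  have hωlen : ω.length = τ.length + 1 := by simp [hω]
  rcases Nat.lt_or_ge j τ.length with hlt2 | hge
  · right
    have he : ω.eraseIdx j = (τ.eraseIdx j) ++ [i] := by
      rw [hω, List.eraseIdx_eq_take_drop_succ, List.eraseIdx_eq_take_drop_succ,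
        List.take_append_of_le_length (le_of_lt hlt2),
        List.drop_append_of_le_length (by omega), List.append_assoc]
    have h2 : (c * t) * cs.simple i = cs.wordProd (τ.eraseIdx j) := by
      rw [herase, he, cs.wordProd_append, cs.wordProd_singleton,
        cs.simple_mul_simple_cancel_right]
    have h3 : cs.length ((c * t) * cs.simple i) ≤ τ.length - 1 := by
      rw [h2]
      have h4 := cs.length_wordProd_le (τ.eraseIdx j)
      rwa [List.length_eraseIdx, if_pos hlt2] at h4
    have hτlen' : cs.length (c * cs.simple i) = τ.length := by rw [hτprod]; exact hτlen
    omega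
  · left
    have hj2 : j = τ.length := by omega
    have he : ω.eraseIdx j = τ := by
      rw [hω, hj2, List.eraseIdx_eq_take_drop_succ, List.take_left]
      have hlen2 : (τ ++ [i]).length = τ.length + 1 := by simp
      rw [← hlen2, List.drop_length, List.append_nil]
    rw [herase, he, ← hτprod]

/-- A length-increasing reflection factorization. -/
def IncF (n : ℕ) (c : W) (l : List W) : Prop :=
  l.length = n ∧ l.prod = c ∧ (∀ t ∈ l, cs.IsReflection t) ∧
    ∀ k < n, cs.length ((l.take k).prod) < cs.length ((l.take (k + 1)).prod)

lemma partials_lower {n : ℕ} {c : W} {l : List W} (h : IncF cs n c l) :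
    ∀ k ≤ n, k ≤ cs.length ((l.take k).prod) := by
  intro k
  induction k with
  | zero => intro _; omega
  | succ k ih =>
    intro hk
    have h1 := ih (by omega)
    have h2 := h.2.2.2 k (by omega)
    omega

lemma partials_eq {n : ℕ} {c : W} {l : List W} (h : IncF cs n c l)
    (hc : cs.length c = n) : ∀ k ≤ n, cs.length ((l.take k).prod) = k := by
  have step : ∀ d k, k + d ≤ n →
      cs.length ((l.take k).prod) + d ≤ cs.length ((l.take (k + d)).prod) := by
    intro d
    induction d with
    | zero => intro k _; simp
    | succ d ih =>
      intro k hk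
      have h1 := ih k (by omega)
      have h2 := h.2.2.2 (k + d) (by omega)
      have e : k + (d + 1) = (k + d) + 1 := by omega
      rw [e]
      omega
  intro k hk
  have h1 := partials_lower cs h k hk
  have h2 := step (n - k) k (by omega)
  have h3 : l.take (k + (n - k)) = l := by
    have e : k + (n - k) = n := by omega
    rw [e, ← h.1, List.take_length]
  rw [h3, h.2.1, hc] at h2
  omega


end CS

end HurwitzAux

end


namespace HurwitzAux

variable {W : Type*} [Group W] {B : Type*} {M : CoxeterMatrix B} (cs : CoxeterSystem M W)

lemma hurwitz_append {p q : List W} (t : W) (h : Relation.EqvGen HurwitzMove p q) :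
    Relation.EqvGen HurwitzMove (p ++ [t]) (q ++ [t]) := by
  induction h with
  | rel x y hxy =>
    obtain ⟨l₁, l₂, a, b, h1, h2⟩ := hxy
    exact Relation.EqvGen.rel _ _ ⟨l₁, l₂ ++ [t], a, b, by rw [h1]; simp, by rw [h2]; simp⟩
  | refl x => exact Relation.EqvGen.refl _
  | symm x y _ ih => exact Relation.EqvGen.symm _ _ ih
  | trans x y z _ _ ih1 ih2 => exact Relation.EqvGen.trans _ _ _ ih1 ih2

lemma lemM (n : ℕ) :
    ∀ (c : W) (i : B), cs.length c = n → cs.IsRightDescent c i →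
    ∀ l : List W, IncF cs n c l →
    ∃ p : List W, IncF cs n c (p ++ [cs.simple i]) ∧
      Relation.EqvGen HurwitzMove l (p ++ [cs.simple i]) := by
  induction n with
  | zero =>
    intro c i hc hd l hl
    exact absurd hd (by rw [cs.length_eq_zero_iff.mp hc]; exact cs.not_isRightDescent_one i)
  | succ n ih =>
    intro c i hc hd l hl
    have hlne : l ≠ [] := by
      intro h
      rw [h] at hl
      simpa using hl.1
    set p := l.dropLast with hp
    set t := l.getLast hlne with htdef
    have hl_eq : p ++ [t] = l := List.dropLast_append_getLast hlne
    have hplen : p.length = n := by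
      have h1 := hl.1
      rw [← hl_eq] at h1
      simp at h1
      omega
    have htrefl : cs.IsReflection t := hl.2.2.1 t (List.getLast_mem hlne)
    have hprodpt : p.prod * t = c := by
      rw [← hl.2.1, ← hl_eq, List.prod_append]
      simp
    have hvals := partials_eq cs hl hc
    have hu : cs.length p.prod = n := by
      have h1 : l.take n = p := by
        rw [← hl_eq, ← hplen]
        exact List.take_left
      have h2 := hvals n (by omega)
      rwa [h1] at h2
    have huct : p.prod = c * t := by
      have h1 : c * t = p.prod * (t * t) := by rw [← mul_assoc, hprodpt]
      rw [htrefl.mul_self, mul_one] at h1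
      exact h1.symm
    by_cases hts : t = cs.simple i
    · refine ⟨p, ?_, ?_⟩
      · rw [← hts, hl_eq]; exact hl
      · rw [← hts, hl_eq]; exact Relation.EqvGen.refl l
    · have hlift := lifting_s12 cs htrefl hd (by rw [← huct, hu, hc])
      rcases hlift with heq | hdu
      · exact absurd (mul_left_cancel heq) hts
      · rw [← huct] at hdu
        have hdup : cs.IsRightDescent p.prod i := hdu
        have hIncp : IncF cs n p.prod p := by
          refine ⟨hplen, rfl, ?_, ?_⟩
          · intro x hx
            exact hl.2.2.1 x (by rw [← hl_eq]; exact List.mem_append.mpr (Or.inl hx))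
          · intro k hk
            have e1 : p.take k = l.take k := by
              rw [← hl_eq, List.take_append_of_le_length (by omega)]
            have e2 : p.take (k + 1) = l.take (k + 1) := by
              rw [← hl_eq, List.take_append_of_le_length (by omega)]
            rw [e1, e2]
            exact hl.2.2.2 k (by omega)
        obtain ⟨p₂, hp₂inc, hp₂eqv⟩ := ih p.prod i hu hdup p hIncp
        have hss : cs.simple i * cs.simple i = 1 := cs.simple_mul_simple_self i
        have hp₂len : p₂.length + 1 = n := by
          have h1 := hp₂inc.1
          simpa using h1
        have hp₂prod : p₂.prod * cs.simple i = p.prod := by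
          have h1 := hp₂inc.2.1
          rw [List.prod_append] at h1
          simpa using h1
        have vals₂ := partials_eq cs hp₂inc hu
        have hLlen : ((p₂ ++ [cs.simple i * t * cs.simple i]) ++ [cs.simple i]).length = n + 1 := by
          simp
          omega
        have hLprod : ((p₂ ++ [cs.simple i * t * cs.simple i]) ++ [cs.simple i]).prod = c := by
          rw [show c = p₂.prod * cs.simple i * t * (cs.simple i * cs.simple i) by
            rw [hss, mul_one, hp₂prod, hprodpt]]
          simp only [List.prod_append, List.prod_cons, List.prod_nil]
          group
        have hcsi : cs.length (c * cs.simple i) = n := by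
          have h1 := cs.isRightDescent_iff.mp hd
          omega
        have hLtaken : ((p₂ ++ [cs.simple i * t * cs.simple i]) ++ [cs.simple i]).take n
            = p₂ ++ [cs.simple i * t * cs.simple i] := by
          have hn : (p₂ ++ [cs.simple i * t * cs.simple i]).length = n := by simp; omega
          rw [← hn]
          exact List.take_left
        have hprodp₂r : (p₂ ++ [cs.simple i * t * cs.simple i]).prod = c * cs.simple i := by
          rw [show c * cs.simple i = p₂.prod * cs.simple i * t * cs.simple i by
            rw [hp₂prod, hprodpt]]
          simp only [List.prod_append, List.prod_cons, List.prod_nil]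
          group
        have hLvals : ∀ k ≤ n + 1,
            cs.length (((p₂ ++ [cs.simple i * t * cs.simple i]) ++ [cs.simple i]).take k).prod = k := by
          intro k hk
          rcases Nat.lt_or_ge k n with hk1 | hk1
          · have e1 : ((p₂ ++ [cs.simple i * t * cs.simple i]) ++ [cs.simple i]).take k = p₂.take k := by
              rw [List.append_assoc, List.take_append_of_le_length (by omega)]
            have e2 : (p₂ ++ [cs.simple i]).take k = p₂.take k :=
              List.take_append_of_le_length (by omega)
            rw [e1, ← e2]
            exact vals₂ k (by omega)
          · rcases Nat.lt_or_ge k (n + 1) with hk2 | hk2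
            · have hkn : k = n := by omega
              rw [hkn, hLtaken, hprodp₂r, hcsi]
            · have hkn : k = n + 1 := by omega
              rw [hkn, ← hLlen, List.take_length, hLprod, hc]
              omega
        refine ⟨p₂ ++ [cs.simple i * t * cs.simple i], ?_, ?_⟩
        · refine ⟨hLlen, hLprod, ?_, ?_⟩
          · intro x hx
            rcases List.mem_append.mp hx with hx1 | hx2
            · rcases List.mem_append.mp hx1 with hy1 | hy2
              · exact hp₂inc.2.2.1 x (List.mem_append.mpr (Or.inl hy1))
              · have hxr : x = cs.simple i * t * cs.simple i := by simpa using hy2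
                rw [hxr]
                have hconj := htrefl.conj (cs.simple i)
                rwa [cs.inv_simple] at hconj
            · have hxs : x = cs.simple i := by simpa using hx2
              rw [hxs]
              exact cs.isReflection_simple i
          · intro k hk
            rw [hLvals k (by omega), hLvals (k + 1) (by omega)]
            omega
        · have h0 : Relation.EqvGen HurwitzMove l ((p₂ ++ [cs.simple i]) ++ [t]) := by
            rw [← hl_eq]
            exact hurwitz_append t hp₂eqv
          refine Relation.EqvGen.trans _ _ _ h0 (Relation.EqvGen.rel _ _ ?_)
          exact ⟨p₂, [], cs.simple i, t, by simp, by simp⟩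

theorem auxMain (n : ℕ) : ∀ c : W, cs.length c = n → ∀ l l', IncF cs n c l → IncF cs n c l' →
    Relation.EqvGen HurwitzMove l l' := by
  induction n with
  | zero =>
    intro c hc l l' hl hl'
    have h1 : l = [] := List.length_eq_zero_iff.mp hl.1
    have h2 : l' = [] := List.length_eq_zero_iff.mp hl'.1
    rw [h1, h2]
    exact Relation.EqvGen.refl _
  | succ n ih =>
    intro c hc l l' hl hl'
    have hc1 : c ≠ 1 := by
      intro h
      rw [h, cs.length_one] at hc
      omega
    obtain ⟨i, hd⟩ := cs.exists_rightDescent_of_ne_one hc1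
    obtain ⟨p, hpinc, hpeqv⟩ := lemM cs (n + 1) c i hc hd l hl
    obtain ⟨q, hqinc, hqeqv⟩ := lemM cs (n + 1) c i hc hd l' hl'
    have hstrip : ∀ u : List W, IncF cs (n + 1) c (u ++ [cs.simple i]) →
        IncF cs n (c * cs.simple i) u := by
      intro u hu
      have hulen : u.length = n := by
        have := hu.1
        simp at this
        omega
      have huprod : u.prod = c * cs.simple i := by
        have h1 : u.prod * cs.simple i = c := by
          have := hu.2.1
          rw [List.prod_append] at this
          simpa using this
        rw [← h1, cs.simple_mul_simple_cancel_right]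
      refine ⟨hulen, huprod, ?_, ?_⟩
      · intro x hx
        exact hu.2.2.1 x (List.mem_append.mpr (Or.inl hx))
      · intro k hk
        have e1 : u.take k = (u ++ [cs.simple i]).take k :=
          (List.take_append_of_le_length (by omega)).symm
        have e2 : u.take (k + 1) = (u ++ [cs.simple i]).take (k + 1) :=
          (List.take_append_of_le_length (by omega)).symm
        rw [e1, e2]
        exact hu.2.2.2 k (by omega)
    have hlen_csi : cs.length (c * cs.simple i) = n := by
      have := cs.isRightDescent_iff.mp hd
      omega
    have hmid := ih (c * cs.simple i) hlen_csi p q (hstrip p hpinc) (hstrip q hqinc)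
    exact Relation.EqvGen.trans _ _ _ hpeqv
      (Relation.EqvGen.trans _ _ _ (hurwitz_append _ hmid) (Relation.EqvGen.symm _ _ hqeqv))

lemma exists_word_of_simples : ∀ ls : List W, (∀ x ∈ ls, x ∈ Set.range cs.simple) →
    ∃ ω : List B, ω.length = ls.length ∧ cs.wordProd ω = ls.prod := by
  intro ls
  induction ls with
  | nil => intro _; exact ⟨[], rfl, by simp⟩
  | cons x xs ih =>
    intro h
    obtain ⟨i, hi⟩ := h x List.mem_cons_self
    obtain ⟨ω, hlen, hprd⟩ := ih (fun y hy => h y (List.mem_cons_of_mem x hy))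
    exact ⟨i :: ω, by simp [hlen], by rw [cs.wordProd_cons, hprd, hi]; simp⟩

end HurwitzAux


/-- Let `(W,S)` be a Coxeter system of finite rank and let
`c = s₁ ⋯ sₙ` be a standard parabolic Coxeter element (a product of `n` pairwise
distinct simple generators).  Then any two factorizations of `c` into `n` reflections
whose partial products are strictly increasing in `S`-length lie in the same Hurwitz
orbit of the braid group `Bₙ`. -/
theorem increasing_factorizations_same_hurwitz_orbit
    {W : Type*} [Group W] {B : Type*} [Finite B]
    (M : CoxeterMatrix B) (cs : CoxeterSystem M W)
    (n : ℕ) (c : W)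
    (ls : List W) (hnd : ls.Nodup) (hsimple : ∀ x ∈ ls, x ∈ Set.range cs.simple)
    (hlslen : ls.length = n) (hlsprod : ls.prod = c)
    (l l' : List W) (hlen : l.length = n) (hlen' : l'.length = n)
    (hrefl : ∀ t ∈ l, cs.IsReflection t) (hrefl' : ∀ t ∈ l', cs.IsReflection t)
    (hprod : l.prod = c) (hprod' : l'.prod = c)
    (hinc : ∀ k < n, cs.length ((l.take k).prod) < cs.length ((l.take (k + 1)).prod))
    (hinc' : ∀ k < n,
      cs.length ((l'.take k).prod) < cs.length ((l'.take (k + 1)).prod)) :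
    Relation.EqvGen HurwitzMove l l' := by
  obtain ⟨ω, hωlen, hωprod⟩ := HurwitzAux.exists_word_of_simples cs ls hsimple
  have hupper : cs.length c ≤ n := by
    rw [← hlsprod, ← hωprod]
    calc cs.length (cs.wordProd ω) ≤ ω.length := cs.length_wordProd_le ω
    _ = n := by rw [hωlen, hlslen]
  have hl : HurwitzAux.IncF cs n c l := ⟨hlen, hprod, hrefl, hinc⟩
  have hl' : HurwitzAux.IncF cs n c l' := ⟨hlen', hprod', hrefl', hinc'⟩
  have hlower : n ≤ cs.length c := by
    have h1 := HurwitzAux.partials_lower cs hl n (le_refl n)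
    rw [← hlen, List.take_length, hprod] at h1
    omega
  exact HurwitzAux.auxMain cs n c (by omega) l l' hl hl'
end
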